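/- Let 0 < ε < 1 and suppose R₁ ≥ 0 satisfies |log( sin y / y )| ≤ R₁·y² for all y ∈ (0, ε]. Set c₁ = ∫₀¹ |log(1/t² − 1)|·t·√(log(1/t)) dt and, for x ∈ (0, ε], U₁(x) = x²·∫₀¹ |Î(x,t)|·t·√(log(1 + 1/(x t))) dt. Then for all x ∈ (0, ε]: U₁(x)/( −x²·log x·√(log(1 + 1/x)) ) ≤ (1/√(log(1 + 1/x)))·( log 2/√(log(1/x)) + (c₁ + log 2·√(log(1 + x)))/log(1/x) + (3R₁/8)·x²·( 2/√(log(1/x)) + (√(π/2) + 2·√(log(1 + x)))/log(1/x) ) ). -/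

import Mathlib

open Set

/-- `Î(x,t) = log( sin(x(1−t)/2)·sin(x(1+t)/2) / sin(xt/2)² )`. -/
noncomputable def Ihat (x t : ℝ) : ℝ :=
  Real.log (Real.sin (x * (1 - t) / 2) * Real.sin (x * (1 + t) / 2) / Real.sin (x * t / 2) ^ 2)

/-- `c₁ = ∫₀¹ |log(1/t² − 1)|·t·√(log(1/t)) dt`. -/
noncomputable def c₁ : ℝ :=
  ∫ t in (0:ℝ)..1, |Real.log (1 / t ^ 2 - 1)| * t * Real.sqrt (Real.log (1 / t))

/-- `U₁(x) = x²·∫₀¹ |Î(x,t)|·t·√(log(1 + 1/(xt))) dt`. -/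
noncomputable def U₁ (x : ℝ) : ℝ :=
  x ^ 2 * ∫ t in (0:ℝ)..1, |Ihat x t| * t * Real.sqrt (Real.log (1 + 1 / (x * t)))

open MeasureTheory intervalIntegral


/-- For `0 < t` and `0 < r`, `log (1/t) ≤ r⁻¹ * t ^ (-r)`. -/
lemma aux_log_inv_le {t r : ℝ} (ht : 0 < t) (hr : 0 < r) :
    Real.log (1 / t) ≤ r⁻¹ * t ^ (-r) := by
  have h1 : Real.log (t ^ (-r)) ≤ t ^ (-r) - 1 :=
    Real.log_le_sub_one_of_pos (Real.rpow_pos_of_pos ht _)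
  rw [Real.log_rpow ht] at h1
  rw [one_div, Real.log_inv]
  have h4 : (0:ℝ) < r⁻¹ := by positivity
  have h5 : r⁻¹ * r = 1 := inv_mul_cancel₀ hr.ne'
  have h6 : -Real.log t ≤ r⁻¹ * (t ^ (-r) - 1) := by
    have h7 := mul_le_mul_of_nonneg_left h1 h4.le
    calc -Real.log t = r⁻¹ * (-r * Real.log t) := by field_simp
      _ ≤ _ := h7
  nlinarith [h6]

/-- `√(a+b+c) ≤ √a + √b + √c` for nonnegative reals. -/
lemma aux_sqrt_add3 {a b c : ℝ} (ha : 0 ≤ a) (hb : 0 ≤ b) (hc : 0 ≤ c) :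
    Real.sqrt (a + b + c) ≤ Real.sqrt a + Real.sqrt b + Real.sqrt c := by
  have h := Real.sq_sqrt ha
  have h2 := Real.sq_sqrt hb
  have h3 := Real.sq_sqrt hc
  have key : a + b + c ≤ (Real.sqrt a + Real.sqrt b + Real.sqrt c) ^ 2 := by
    nlinarith [mul_nonneg (Real.sqrt_nonneg a) (Real.sqrt_nonneg b),
      mul_nonneg (Real.sqrt_nonneg b) (Real.sqrt_nonneg c),
      mul_nonneg (Real.sqrt_nonneg a) (Real.sqrt_nonneg c)]
  calc Real.sqrt (a + b + c) ≤ Real.sqrt ((Real.sqrt a + Real.sqrt b + Real.sqrt c) ^ 2) :=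
        Real.sqrt_le_sqrt key
    _ = _ := Real.sqrt_sq (by positivity)

/-- master integrability lemma on `(0,1]` from rpow bounds on the two halves. -/
lemma aux_integrableOn {f : ℝ → ℝ} (hm : AEStronglyMeasurable f (volume.restrict (Ioc 0 1)))
    {C : ℝ} (hC : 0 ≤ C)
    (h1 : ∀ t ∈ Ioc (0:ℝ) (1/2), |f t| ≤ C * t ^ (-(1/2) : ℝ))
    (h2 : ∀ t ∈ Ioo (1/2:ℝ) 1, |f t| ≤ C * (1 - t) ^ (-(1/2) : ℝ)) :
    IntegrableOn f (Ioc 0 1) := by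
  have hsub : Ioc (0:ℝ) 1 = Ioc 0 (1/2) ∪ Ioc (1/2) 1 := by
    rw [Set.Ioc_union_Ioc_eq_Ioc] <;> norm_num
  rw [hsub]
  have hs1 : Ioc (0:ℝ) (1/2) ⊆ Ioc 0 1 := Ioc_subset_Ioc_right (by norm_num)
  have hs2 : Ioo (1/2:ℝ) 1 ⊆ Ioc 0 1 := fun t ht => ⟨by linarith [ht.1], ht.2.le⟩
  have hm1 : AEStronglyMeasurable f (volume.restrict (Ioc (0:ℝ) (1/2))) :=
    hm.mono_measure (Measure.restrict_mono hs1 le_rfl)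
  have hm2 : AEStronglyMeasurable f (volume.restrict (Ioo (1/2:ℝ) 1)) :=
    hm.mono_measure (Measure.restrict_mono hs2 le_rfl)
  refine IntegrableOn.union ?_ ?_
  · have hg : IntegrableOn (fun t : ℝ => C * t ^ (-(1/2):ℝ)) (Ioc 0 (1/2)) := by
      have h0 : IntervalIntegrable (fun t : ℝ => t ^ (-(1/2):ℝ)) volume 0 (1/2) :=
        intervalIntegral.intervalIntegrable_rpow' (by norm_num)
      exact ((intervalIntegrable_iff_integrableOn_Ioc_of_le (by norm_num)).mp h0).const_mul C
    refine Integrable.mono hg hm1 ?_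
    filter_upwards [ae_restrict_mem measurableSet_Ioc] with t ht
    have hb := h1 t ht
    have h0 : (0:ℝ) ≤ C * t ^ (-(1/2):ℝ) :=
      mul_nonneg hC (Real.rpow_nonneg (le_of_lt ht.1) _)
    simp only [Real.norm_eq_abs]
    exact le_trans hb (le_of_eq (abs_of_nonneg h0).symm)
  · rw [integrableOn_Ioc_iff_integrableOn_Ioo]
    have hg : IntegrableOn (fun t : ℝ => C * (1 - t) ^ (-(1/2):ℝ)) (Ioo (1/2) 1) := by
      have h0 : IntervalIntegrable (fun t : ℝ => t ^ (-(1/2):ℝ)) volume 0 (1/2) :=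
        intervalIntegral.intervalIntegrable_rpow' (by norm_num)
      have h1' : IntervalIntegrable (fun t : ℝ => (1 - t) ^ (-(1/2):ℝ)) volume (1/2) 1 := by
        have h := h0.comp_sub_left 1
        simpa [show (1:ℝ)-2⁻¹ = 2⁻¹ by norm_num] using h.symm
      have h2' := (intervalIntegrable_iff_integrableOn_Ioc_of_le
        (by norm_num : (1/2:ℝ) ≤ 1)).mp h1'
      exact (IntegrableOn.mono_set h2' Ioo_subset_Ioc_self).const_mul C
    refine Integrable.mono hg hm2 ?_
    filter_upwards [ae_restrict_mem measurableSet_Ioo] with t ht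
    have hb := h2 t ht
    have h0 : (0:ℝ) ≤ C * (1 - t) ^ (-(1/2):ℝ) :=
      mul_nonneg hC (Real.rpow_nonneg (by linarith [ht.2]) _)
    simp only [Real.norm_eq_abs]
    exact le_trans hb (le_of_eq (abs_of_nonneg h0).symm)




lemma aux_rpow_mono {t : ℝ} (ht : 0 < t) (ht1 : t ≤ 1) {y z : ℝ} (h : z ≤ y) :
    t ^ y ≤ t ^ z := Real.rpow_le_rpow_of_exponent_ge ht ht1 h

lemma aux_rpow_one_le {t : ℝ} (ht : 0 < t) (ht1 : t ≤ 1) {y : ℝ} (hy : y ≤ 0) :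
    (1:ℝ) ≤ t ^ y := by
  calc (1:ℝ) = t ^ (0:ℝ) := (Real.rpow_zero t).symm
    _ ≤ t ^ y := aux_rpow_mono ht ht1 hy

lemma aux_sqrtlog_le {t : ℝ} (ht : 0 < t) :
    Real.sqrt (Real.log (1 / t)) ≤ 2 * t ^ (-(1/8) : ℝ) := by
  have h1 : Real.log (1 / t) ≤ 4 * t ^ (-(1/4):ℝ) := by
    have := aux_log_inv_le (r := (1/4:ℝ)) ht (by norm_num)
    norm_num at this ⊢; linarith
  calc Real.sqrt (Real.log (1 / t)) ≤ Real.sqrt (4 * t ^ (-(1/4):ℝ)) := Real.sqrt_le_sqrt h1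
    _ = 2 * t ^ (-(1/8) : ℝ) := by
        rw [Real.sqrt_mul (by norm_num),
          show Real.sqrt 4 = 2 by
            rw [show (4:ℝ) = 2^2 by norm_num, Real.sqrt_sq (by norm_num)]]
        congr 1
        rw [Real.sqrt_eq_rpow, ← Real.rpow_mul ht.le]
        norm_num

lemma aux_log2_le_one : Real.log 2 ≤ 1 := by
  have := Real.log_le_sub_one_of_pos (by norm_num : (0:ℝ) < 2); linarith

lemma aux_sqrtlog_le_one {t : ℝ} (ht : 1/2 ≤ t) : Real.sqrt (Real.log (1 / t)) ≤ 1 := by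
  have h1 : Real.log (1 / t) ≤ 1 := by
    calc Real.log (1 / t) ≤ Real.log 2 := by
          apply Real.log_le_log (by positivity)
          rw [div_le_iff₀ (by linarith)]; linarith
      _ ≤ 1 := aux_log2_le_one
  calc Real.sqrt (Real.log (1/t)) ≤ Real.sqrt 1 := Real.sqrt_le_sqrt h1
    _ = 1 := Real.sqrt_one

lemma aux_absloginv1 {t : ℝ} (ht : 0 < t) (ht2 : t ≤ 1/2) :
    |Real.log (1 / t^2 - 1)| ≤ 16 * t ^ (-(1/8) : ℝ) := by
  have h4 : (1:ℝ) ≤ 1 / t^2 - 1 := by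
    rw [le_sub_iff_add_le, le_div_iff₀ (by positivity)]; nlinarith
  rw [abs_of_nonneg (Real.log_nonneg h4)]
  have h5 : Real.log (1 / t^2 - 1) ≤ Real.log (1 / t^2) := by
    apply Real.log_le_log (by linarith); linarith
  have h6 : Real.log (1 / t^2) = 2 * Real.log (1 / t) := by
    rw [one_div, one_div, Real.log_inv, Real.log_inv, Real.log_pow]; push_cast; ring
  have h7 : Real.log (1 / t) ≤ 8 * t ^ (-(1/8):ℝ) := by
    have := aux_log_inv_le (r := (1/8:ℝ)) ht (by norm_num)
    norm_num at this ⊢; linarith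
  linarith

lemma aux_absloginv2 {t : ℝ} (ht : 1/2 < t) (ht1 : t < 1) :
    |Real.log (1 / t^2 - 1)| ≤ 4 * (1 - t) ^ (-(1/2) : ℝ) := by
  have h0 : (0:ℝ) < t := by linarith
  have h1 : (0:ℝ) < 1 - t := by linarith
  have h2 : (0:ℝ) < 1 - t^2 := by nlinarith
  have harg : 1 / t^2 - 1 = (1 - t^2) / t^2 := by field_simp
  have hlog : Real.log (1 / t^2 - 1) = Real.log (1 - t^2) - 2 * Real.log t := by
    rw [harg, Real.log_div h2.ne' (by positivity), Real.log_pow]; push_cast; ring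
  have hA : Real.log (1 - t^2) ≤ 0 := Real.log_nonpos (by linarith) (by nlinarith)
  have hB : Real.log t ≤ 0 := Real.log_nonpos h0.le ht1.le
  have habs : |Real.log (1 / t^2 - 1)| ≤ -Real.log (1 - t^2) - 2 * Real.log t := by
    rw [hlog, abs_sub_comm]
    calc |2 * Real.log t - Real.log (1 - t^2)|
        ≤ |2 * Real.log t| + |Real.log (1 - t^2)| := abs_sub _ _
      _ = -(2 * Real.log t) + -Real.log (1 - t^2) := by
          rw [abs_of_nonpos (by linarith), abs_of_nonpos hA]
      _ = -Real.log (1 - t^2) - 2 * Real.log t := by ring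
  have hC : -Real.log (1 - t^2) ≤ 2 * (1 - t) ^ (-(1/2):ℝ) := by
    have e1 : -Real.log (1 - t^2) = Real.log (1 / (1 - t^2)) := by
      rw [one_div, Real.log_inv]
    have e2 : Real.log (1 / (1 - t^2)) ≤ Real.log (1 / (1 - t)) := by
      apply Real.log_le_log (by positivity)
      exact one_div_le_one_div_of_le h1 (by nlinarith)
    have e3 := aux_log_inv_le (t := 1 - t) (r := (1/2:ℝ)) h1 (by norm_num)
    norm_num at e3
    have e4 : Real.log (1/(1-t)) = -Real.log (1-t) := by rw [one_div, Real.log_inv]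
    rw [e1]; rw [e4] at e2; linarith
  have hD : -2 * Real.log t ≤ 2 * (1 - t) ^ (-(1/2):ℝ) := by
    have e1 : -Real.log t = Real.log (1 / t) := by rw [one_div, Real.log_inv]
    have e2 : Real.log (1 / t) ≤ 1 := by
      calc Real.log (1 / t) ≤ Real.log 2 := by
            apply Real.log_le_log (by positivity)
            rw [div_le_iff₀ h0]; linarith
        _ ≤ 1 := aux_log2_le_one
    have e3 : (1:ℝ) ≤ (1 - t) ^ (-(1/2):ℝ) := aux_rpow_one_le h1 (by linarith) (by norm_num)
    nlinarith
  linarith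

lemma aux_measJ2 : AEStronglyMeasurable
    (fun t : ℝ => |Real.log (1 / t^2 - 1)| * t * Real.sqrt (Real.log (1 / t)))
    (volume.restrict (Ioc 0 1)) := by
  apply Measurable.aestronglyMeasurable
  have m0 : Measurable fun t : ℝ => 1 / t^2 - 1 :=
    (measurable_const.div (measurable_id.pow_const 2)).sub measurable_const
  have m1 : Measurable fun t : ℝ => Real.sqrt (Real.log (1 / t)) :=
    Real.continuous_sqrt.measurable.comp
      (Real.measurable_log.comp (measurable_const.div measurable_id))
  exact ((Real.measurable_log.comp m0).abs.mul measurable_id).mul m1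




lemma aux_intJ1 : IntegrableOn (fun t : ℝ => |Real.log (1 / t^2 - 1)| * t) (Ioc 0 1) := by
  have m0 : Measurable fun t : ℝ => 1 / t^2 - 1 :=
    (measurable_const.div (measurable_id.pow_const 2)).sub measurable_const
  refine aux_integrableOn (((Real.measurable_log.comp m0).abs.mul
    measurable_id).aestronglyMeasurable) (C := 16) (by norm_num) ?_ ?_
  · rintro t ⟨ht0, ht2⟩
    have h1 := aux_absloginv1 ht0 ht2
    have h2 : t ^ (-(1/8):ℝ) ≤ t ^ (-(1/2):ℝ) := aux_rpow_mono ht0 (by linarith) (by norm_num)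
    have h3 : (0:ℝ) ≤ |Real.log (1 / t^2 - 1)| := abs_nonneg _
    rw [abs_of_nonneg (mul_nonneg h3 ht0.le)]
    calc |Real.log (1 / t^2 - 1)| * t ≤ (16 * t ^ (-(1/8):ℝ)) * 1 := by
          apply mul_le_mul h1 (by linarith) ht0.le (by positivity)
      _ = 16 * t ^ (-(1/8):ℝ) := by ring
      _ ≤ 16 * t ^ (-(1/2):ℝ) := by linarith
  · rintro t ⟨ht0, ht1⟩
    have h1 := aux_absloginv2 ht0 ht1
    rw [abs_of_nonneg (mul_nonneg (abs_nonneg _) (by linarith))]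
    calc |Real.log (1 / t^2 - 1)| * t ≤ (4 * (1-t) ^ (-(1/2):ℝ)) * 1 := by
          exact mul_le_mul h1 (by linarith) (by linarith)
            (mul_nonneg (by norm_num) (Real.rpow_nonneg (by linarith) _))
      _ ≤ 16 * (1-t) ^ (-(1/2):ℝ) := by
          have : (0:ℝ) ≤ (1-t) ^ (-(1/2):ℝ) := Real.rpow_nonneg (by linarith) _
          linarith

lemma aux_intJ2 : IntegrableOn
    (fun t : ℝ => |Real.log (1 / t^2 - 1)| * t * Real.sqrt (Real.log (1 / t))) (Ioc 0 1) := by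
  have m0 : Measurable fun t : ℝ => 1 / t^2 - 1 :=
    (measurable_const.div (measurable_id.pow_const 2)).sub measurable_const
  have m1 : Measurable fun t : ℝ => Real.sqrt (Real.log (1 / t)) :=
    Real.continuous_sqrt.measurable.comp
      (Real.measurable_log.comp (measurable_const.div measurable_id))
  refine aux_integrableOn ((((Real.measurable_log.comp m0).abs.mul
    measurable_id).mul m1).aestronglyMeasurable) (C := 64) (by norm_num) ?_ ?_
  · rintro t ⟨ht0, ht2⟩
    have h1 := aux_absloginv1 ht0 ht2
    have h2 := aux_sqrtlog_le ht0
    have hr : (0:ℝ) ≤ t ^ (-(1/8):ℝ) := Real.rpow_nonneg ht0.le _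
    have hs : (0:ℝ) ≤ Real.sqrt (Real.log (1/t)) := Real.sqrt_nonneg _
    rw [abs_of_nonneg (mul_nonneg (mul_nonneg (abs_nonneg _) ht0.le) hs)]
    have step1 : |Real.log (1 / t^2 - 1)| * t ≤ 16 * t ^ (-(1/8):ℝ) := by
      calc |Real.log (1 / t^2 - 1)| * t ≤ (16 * t ^ (-(1/8):ℝ)) * 1 :=
            mul_le_mul h1 (by linarith) ht0.le (by positivity)
        _ = 16 * t ^ (-(1/8):ℝ) := by ring
    calc |Real.log (1 / t^2 - 1)| * t * Real.sqrt (Real.log (1/t))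
        ≤ (16 * t ^ (-(1/8):ℝ)) * (2 * t ^ (-(1/8):ℝ)) := by
          apply mul_le_mul step1 h2 hs (by positivity)
      _ = 32 * t ^ (-(1/8):ℝ) * t ^ (-(1/8):ℝ) := by ring
      _ = 32 * t ^ (-(1/4):ℝ) := by
          rw [mul_assoc, ← Real.rpow_add ht0]; norm_num
      _ ≤ 64 * t ^ (-(1/2):ℝ) := by
          have h3 : t ^ (-(1/4):ℝ) ≤ t ^ (-(1/2):ℝ) :=
            aux_rpow_mono ht0 (by linarith) (by norm_num)
          have h4 : (0:ℝ) ≤ t ^ (-(1/4):ℝ) := Real.rpow_nonneg ht0.le _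
          linarith
  · rintro t ⟨ht0, ht1⟩
    have h1 := aux_absloginv2 ht0 ht1
    have h2 : Real.sqrt (Real.log (1/t)) ≤ 1 := aux_sqrtlog_le_one ht0.le
    have hs : (0:ℝ) ≤ Real.sqrt (Real.log (1/t)) := Real.sqrt_nonneg _
    rw [abs_of_nonneg (mul_nonneg (mul_nonneg (abs_nonneg _) (by linarith)) hs)]
    have hrp : (0:ℝ) ≤ (1-t) ^ (-(1/2):ℝ) := Real.rpow_nonneg (by linarith) _
    have step1 : |Real.log (1 / t^2 - 1)| * t ≤ 4 * (1-t) ^ (-(1/2):ℝ) := by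
      calc |Real.log (1 / t^2 - 1)| * t ≤ (4 * (1-t) ^ (-(1/2):ℝ)) * 1 :=
            mul_le_mul h1 (by linarith) (by linarith) (by positivity)
        _ = _ := by ring
    calc |Real.log (1 / t^2 - 1)| * t * Real.sqrt (Real.log (1/t))
        ≤ (4 * (1-t) ^ (-(1/2):ℝ)) * 1 := by
          apply mul_le_mul step1 h2 hs (by positivity)
      _ ≤ 64 * (1-t) ^ (-(1/2):ℝ) := by linarith
lemma aux_intJ4 : IntegrableOn
    (fun t : ℝ => t * Real.sqrt (Real.log (1 / t))) (Ioc 0 1) := by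
  have m1 : Measurable fun t : ℝ => Real.sqrt (Real.log (1 / t)) :=
    Real.continuous_sqrt.measurable.comp
      (Real.measurable_log.comp (measurable_const.div measurable_id))
  refine aux_integrableOn ((measurable_id.mul m1).aestronglyMeasurable)
    (C := 2) (by norm_num) ?_ ?_
  · rintro t ⟨ht0, ht2⟩
    have h2 := aux_sqrtlog_le ht0
    have hs : (0:ℝ) ≤ Real.sqrt (Real.log (1/t)) := Real.sqrt_nonneg _
    rw [abs_of_nonneg (mul_nonneg ht0.le hs)]
    have h3 : t ^ (-(1/8):ℝ) ≤ t ^ (-(1/2):ℝ) := aux_rpow_mono ht0 (by linarith) (by norm_num)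
    calc t * Real.sqrt (Real.log (1/t)) ≤ 1 * (2 * t ^ (-(1/8):ℝ)) :=
          mul_le_mul (by linarith) h2 hs (by norm_num)
      _ = 2 * t ^ (-(1/8):ℝ) := by ring
      _ ≤ 2 * t ^ (-(1/2):ℝ) := by linarith
  · rintro t ⟨ht0, ht1⟩
    have h2 : Real.sqrt (Real.log (1/t)) ≤ 1 := aux_sqrtlog_le_one ht0.le
    have hs : (0:ℝ) ≤ Real.sqrt (Real.log (1/t)) := Real.sqrt_nonneg _
    rw [abs_of_nonneg (mul_nonneg (by linarith) hs)]
    have h3 : (1:ℝ) ≤ (1-t) ^ (-(1/2):ℝ) :=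
      aux_rpow_one_le (by linarith) (by linarith) (by norm_num)
    calc t * Real.sqrt (Real.log (1/t)) ≤ 1 * 1 :=
          mul_le_mul ht1.le h2 hs (by norm_num)
      _ = 1 := by ring
      _ ≤ 2 * (1-t) ^ (-(1/2):ℝ) := by linarith

lemma aux_intFTC : IntegrableOn (fun t : ℝ => t * Real.log (1 / t^2 - 1)) (Ioc 0 1) := by
  have m0 : Measurable fun t : ℝ => 1 / t^2 - 1 :=
    (measurable_const.div (measurable_id.pow_const 2)).sub measurable_const
  have key : ∀ t : ℝ, |t * Real.log (1 / t^2 - 1)| = |Real.log (1 / t^2 - 1)| * |t| := by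
    intro t; rw [abs_mul, mul_comm]
  refine aux_integrableOn ((measurable_id.mul
    (Real.measurable_log.comp m0)).aestronglyMeasurable) (C := 16) (by norm_num) ?_ ?_
  · rintro t ⟨ht0, ht2⟩
    rw [key, abs_of_nonneg ht0.le]
    have h1 := aux_absloginv1 ht0 ht2
    have h2 : t ^ (-(1/8):ℝ) ≤ t ^ (-(1/2):ℝ) := aux_rpow_mono ht0 (by linarith) (by norm_num)
    calc |Real.log (1 / t^2 - 1)| * t ≤ (16 * t ^ (-(1/8):ℝ)) * 1 :=
          mul_le_mul h1 (by linarith) ht0.le (by positivity)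
      _ = 16 * t ^ (-(1/8):ℝ) := by ring
      _ ≤ 16 * t ^ (-(1/2):ℝ) := by linarith
  · rintro t ⟨ht0, ht1⟩
    rw [key, abs_of_nonneg (by linarith : (0:ℝ) ≤ t)]
    have h1 := aux_absloginv2 ht0 ht1
    have hrp : (0:ℝ) ≤ (1-t) ^ (-(1/2):ℝ) := Real.rpow_nonneg (by linarith) _
    calc |Real.log (1 / t^2 - 1)| * t ≤ (4 * (1-t) ^ (-(1/2):ℝ)) * 1 :=
          mul_le_mul h1 (by linarith) (by linarith) (by positivity)
      _ ≤ 16 * (1-t) ^ (-(1/2):ℝ) := by linarith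




noncomputable def auxG (t : ℝ) : ℝ :=
  -((1 - t^2) * Real.log (1 - t^2)) / 2 - t^2 * Real.log t + 1/2

lemma auxG_cont : Continuous auxG := by
  unfold auxG
  have h1 : Continuous fun t : ℝ => (1 - t^2) * Real.log (1 - t^2) :=
    Real.continuous_mul_log.comp (by continuity)
  have h2 : Continuous fun t : ℝ => t^2 * Real.log t := by
    have : (fun t : ℝ => t^2 * Real.log t) = fun t : ℝ => t * (t * Real.log t) := by
      ext t; ring
    rw [this]
    exact continuous_id.mul Real.continuous_mul_log
  continuity

lemma auxG_deriv {t : ℝ} (ht : 0 < t) (ht1 : t < 1) :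
    HasDerivAt auxG (t * Real.log (1 / t^2 - 1)) t := by
  have hu : (0:ℝ) < 1 - t^2 := by nlinarith
  have h1 : HasDerivAt (fun t : ℝ => 1 - t^2) (-(2*t)) t := by
    simpa using ((hasDerivAt_pow 2 t).const_sub 1)
  have hlog1 : HasDerivAt (fun t : ℝ => Real.log (1 - t^2)) (-(2*t) / (1 - t^2)) t :=
    h1.log hu.ne'
  have hmul1 : HasDerivAt (fun t : ℝ => (1 - t^2) * Real.log (1 - t^2))
      (-(2*t) * Real.log (1 - t^2) + (1 - t^2) * (-(2*t) / (1 - t^2))) t :=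
    h1.mul hlog1
  have h2 : HasDerivAt (fun t : ℝ => t^2) (2*t) t := by simpa using hasDerivAt_pow 2 t
  have hmul2 : HasDerivAt (fun t : ℝ => t^2 * Real.log t)
      (2*t * Real.log t + t^2 * t⁻¹) t :=
    h2.mul (Real.hasDerivAt_log ht.ne')
  have := ((hmul1.neg.div_const 2).sub hmul2).add_const (1/2)
  refine HasDerivAt.congr_deriv this ?_
  have harg : 1 / t^2 - 1 = (1 - t^2) / t^2 := by field_simp
  rw [harg, Real.log_div hu.ne' (by positivity), Real.log_pow]
  push_cast
  field_simp
  ring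

lemma aux_sqrt2_inv_lt_one : (Real.sqrt 2)⁻¹ < 1 := by
  rw [inv_lt_one_iff₀]
  right
  have : (1:ℝ) < 2 := one_lt_two
  nlinarith [Real.sq_sqrt (by norm_num : (0:ℝ) ≤ 2), Real.sqrt_nonneg 2]

lemma aux_sqrt2_inv_pos : (0:ℝ) < (Real.sqrt 2)⁻¹ := by
  have : (0:ℝ) < Real.sqrt 2 := Real.sqrt_pos.mpr (by norm_num)
  positivity

lemma aux_sqrt2_inv_sq : ((Real.sqrt 2)⁻¹)^2 = 1/2 := by
  rw [inv_pow, Real.sq_sqrt (by norm_num : (0:ℝ) ≤ 2)]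
  norm_num

lemma aux_V1 : ∫ t in (0:ℝ)..1, |Real.log (1 / t^2 - 1)| * t = Real.log 2 := by
  set a : ℝ := (Real.sqrt 2)⁻¹ with ha_def
  have ha0 : 0 < a := aux_sqrt2_inv_pos
  have ha1 : a < 1 := aux_sqrt2_inv_lt_one
  have ha2 : a^2 = 1/2 := aux_sqrt2_inv_sq
  have hint : IntervalIntegrable (fun t : ℝ => t * Real.log (1 / t^2 - 1)) volume 0 1 :=
    (intervalIntegrable_iff_integrableOn_Ioc_of_le zero_le_one).mpr aux_intFTC
  have hintJ : IntervalIntegrable (fun t : ℝ => |Real.log (1 / t^2 - 1)| * t) volume 0 1 :=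
    (intervalIntegrable_iff_integrableOn_Ioc_of_le zero_le_one).mpr aux_intJ1
  have hint1 : IntervalIntegrable (fun t : ℝ => t * Real.log (1 / t^2 - 1)) volume 0 a :=
    hint.mono_set (by rw [uIcc_of_le ha0.le, uIcc_of_le zero_le_one]; exact Icc_subset_Icc le_rfl ha1.le)
  have hint2 : IntervalIntegrable (fun t : ℝ => t * Real.log (1 / t^2 - 1)) volume a 1 :=
    hint.mono_set (by rw [uIcc_of_le ha1.le, uIcc_of_le zero_le_one]; exact Icc_subset_Icc ha0.le le_rfl)
  have hintJ1 : IntervalIntegrable (fun t : ℝ => |Real.log (1 / t^2 - 1)| * t) volume 0 a :=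
    hintJ.mono_set (by rw [uIcc_of_le ha0.le, uIcc_of_le zero_le_one]; exact Icc_subset_Icc le_rfl ha1.le)
  have hintJ2 : IntervalIntegrable (fun t : ℝ => |Real.log (1 / t^2 - 1)| * t) volume a 1 :=
    hintJ.mono_set (by rw [uIcc_of_le ha1.le, uIcc_of_le zero_le_one]; exact Icc_subset_Icc ha0.le le_rfl)
  have hsplit : ∫ t in (0:ℝ)..1, |Real.log (1 / t^2 - 1)| * t =
      (∫ t in (0:ℝ)..a, |Real.log (1 / t^2 - 1)| * t)
        + ∫ t in a..(1:ℝ), |Real.log (1 / t^2 - 1)| * t :=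
    (integral_add_adjacent_intervals hintJ1 hintJ2).symm
  -- first piece
  have hcongr1 : ∫ t in (0:ℝ)..a, |Real.log (1 / t^2 - 1)| * t
      = ∫ t in (0:ℝ)..a, t * Real.log (1 / t^2 - 1) := by
    apply integral_congr
    intro t ht
    rw [uIcc_of_le ha0.le] at ht
    rcases eq_or_lt_of_le ht.1 with h0 | h0
    · simp [← h0]
    · have h4 : (1:ℝ) ≤ 1 / t^2 - 1 := by
        rw [le_sub_iff_add_le, le_div_iff₀ (by positivity)]
        nlinarith [ht.2, ha2]
      dsimp only
      rw [abs_of_nonneg (Real.log_nonneg h4)]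
      ring
  have hcongr2 : ∫ t in a..(1:ℝ), |Real.log (1 / t^2 - 1)| * t
      = ∫ t in a..(1:ℝ), -(t * Real.log (1 / t^2 - 1)) := by
    apply integral_congr
    intro t ht
    rw [uIcc_of_le ha1.le] at ht
    have ht0 : 0 < t := lt_of_lt_of_le ha0 ht.1
    have h4 : 1 / t^2 - 1 ≤ 1 := by
      rw [sub_le_iff_le_add, div_le_iff₀ (by positivity)]
      nlinarith [ht.1, ha2, sq_nonneg (t - a)]
    have h5 : 0 ≤ 1 / t^2 - 1 := by
      rw [sub_nonneg, le_div_iff₀ (by positivity)]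
      nlinarith [ht.2]
    have h6 : Real.log (1 / t^2 - 1) ≤ 0 := by
      rcases eq_or_lt_of_le h5 with h7 | h7
      · rw [← h7, Real.log_zero]
      · exact Real.log_nonpos h5 h4
    dsimp only
    rw [abs_of_nonpos h6]
    ring
  have hFTC1 : ∫ t in (0:ℝ)..a, t * Real.log (1 / t^2 - 1) = auxG a - auxG 0 := by
    apply integral_eq_sub_of_hasDeriv_right_of_le ha0.le
      (auxG_cont.continuousOn)
      (fun t ht => ((auxG_deriv ht.1 (lt_trans ht.2 ha1)).hasDerivWithinAt))
      hint1
  have hFTC2 : ∫ t in a..(1:ℝ), t * Real.log (1 / t^2 - 1) = auxG 1 - auxG a := by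
    apply integral_eq_sub_of_hasDeriv_right_of_le ha1.le
      (auxG_cont.continuousOn)
      (fun t ht => ((auxG_deriv (lt_trans ha0 ht.1) ht.2).hasDerivWithinAt))
      hint2
  have hG0 : auxG 0 = 1/2 := by simp [auxG]
  have hG1 : auxG 1 = 1/2 := by simp [auxG]
  have hGa : auxG a = Real.log 2 / 2 + 1/2 := by
    unfold auxG
    rw [ha2]
    have hloga : Real.log a = -(Real.log 2 / 2) := by
      rw [ha_def, Real.log_inv, Real.log_sqrt (by norm_num)]
    rw [hloga]
    have h8 : Real.log (1 - 1/2 : ℝ) = -Real.log 2 := by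
      rw [show (1:ℝ) - 1/2 = 2⁻¹ by norm_num, Real.log_inv]
    rw [h8]
    ring
  rw [hsplit, hcongr1, hcongr2, intervalIntegral.integral_neg, hFTC1, hFTC2, hG0, hG1, hGa]
  ring



lemma aux_image_exp_neg : (fun x : ℝ => Real.exp (-x)) '' (Ioi 0) = Ioo 0 1 := by
  ext y
  constructor
  · rintro ⟨x, hx, rfl⟩
    exact ⟨Real.exp_pos _, by rw [Real.exp_lt_one_iff]; simpa using hx⟩
  · rintro ⟨hy0, hy1⟩
    refine ⟨-Real.log y, by simpa using Real.log_neg hy0 hy1, ?_⟩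
    show Real.exp (-(-Real.log y)) = y
    rw [neg_neg, Real.exp_log hy0]

lemma aux_V4 : ∫ t in Ioc (0:ℝ) 1, t * Real.sqrt (Real.log (1 / t))
    = Real.sqrt (Real.pi / 2) / 4 := by
  rw [integral_Ioc_eq_integral_Ioo, ← aux_image_exp_neg]
  rw [integral_image_eq_integral_abs_deriv_smul measurableSet_Ioi
    (f' := fun x : ℝ => -Real.exp (-x))
    (fun x _ => (by simpa using (hasDerivAt_neg x).exp :
      HasDerivAt (fun x : ℝ => Real.exp (-x)) (-Real.exp (-x)) x).hasDerivWithinAt)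
    (fun a _ b _ hab => by
      have := Real.exp_injective hab; linarith [neg_inj.mp this])]
  have hcong : ∀ x ∈ Ioi (0:ℝ),
      |(-Real.exp (-x))| • (Real.exp (-x) * Real.sqrt (Real.log (1 / Real.exp (-x))))
      = Real.exp (-(2*x)) * Real.sqrt x := by
    intro x hx
    have hlog : Real.log (1 / Real.exp (-x)) = x := by
      rw [one_div, Real.exp_neg, inv_inv, Real.log_exp]
    rw [abs_neg, abs_of_pos (Real.exp_pos _), smul_eq_mul, hlog, ← mul_assoc, ← Real.exp_add,
      show -x + -x = -(2*x) by ring]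
  rw [setIntegral_congr_fun measurableSet_Ioi hcong]
  have hcong2 : ∀ x ∈ Ioi (0:ℝ),
      Real.exp (-(2*x)) * Real.sqrt x = x ^ ((1:ℝ)/2) * Real.exp (-2 * x ^ (1:ℝ)) := by
    intro x hx
    rw [Real.rpow_one, Real.sqrt_eq_rpow]
    ring_nf
  rw [setIntegral_congr_fun measurableSet_Ioi hcong2]
  rw [integral_rpow_mul_exp_neg_mul_rpow one_pos (by norm_num) two_pos]
  rw [show (((1:ℝ)/2 + 1) / 1) = 3/2 by norm_num,
    show ((-((1:ℝ)/2 + 1)) / 1) = -(3/2) by norm_num]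
  have hG : Real.Gamma (3/2 : ℝ) = Real.sqrt Real.pi / 2 := by
    have := Real.Gamma_add_one (s := (1/2:ℝ)) (by norm_num)
    rw [show (3/2:ℝ) = 1/2 + 1 by norm_num, this, Real.Gamma_one_half_eq]
    ring
  rw [hG]
  have h2 : (2:ℝ) ^ (-(3/2) : ℝ) = 1 / (2 * Real.sqrt 2) := by
    rw [show (-(3/2) : ℝ) = -(1 + 1/2) by norm_num, Real.rpow_neg (by norm_num),
      Real.rpow_add two_pos, Real.rpow_one, ← Real.sqrt_eq_rpow, one_div]
  rw [h2]
  have hsq2 : Real.sqrt (Real.pi / 2) = Real.sqrt Real.pi / Real.sqrt 2 :=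
    Real.sqrt_div Real.pi_nonneg 2
  rw [hsq2]
  have hs2 : (0:ℝ) < Real.sqrt 2 := Real.sqrt_pos.mpr (by norm_num)
  field_simp
  ring




set_option maxHeartbeats 1000000 in
lemma aux_Ihat_bound {ε R₁ : ℝ} (hε1 : ε < 1) (hR₁ : 0 ≤ R₁)
    (hR₁' : ∀ y ∈ Ioc (0:ℝ) ε, |Real.log (Real.sin y / y)| ≤ R₁ * y ^ 2)
    {x t : ℝ} (hx : 0 < x) (hxe : x ≤ ε) (ht : 0 < t) (ht1 : t < 1) :
    |Ihat x t| ≤ |Real.log (1 / t^2 - 1)| + 3/2 * R₁ * x^2 := by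
  have hε0 : 0 < ε := lt_of_lt_of_le hx hxe
  obtain ⟨a, ha_def⟩ : ∃ a : ℝ, a = x * (1 - t) / 2 := ⟨_, rfl⟩
  obtain ⟨b, hb_def⟩ : ∃ b : ℝ, b = x * (1 + t) / 2 := ⟨_, rfl⟩
  obtain ⟨c, hc_def⟩ : ∃ c : ℝ, c = x * t / 2 := ⟨_, rfl⟩
  have hpi : (3:ℝ) < Real.pi := Real.pi_gt_three
  have ha0 : 0 < a := by rw [ha_def]; have : 0 < 1 - t := by linarith
                         positivity
  have hb0 : 0 < b := by rw [hb_def]; have : 0 < 1 + t := by linarith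
                         positivity
  have hc0 : 0 < c := by rw [hc_def]; positivity
  have haε : a ≤ ε := by rw [ha_def]; nlinarith
  have hbε : b ≤ ε := by rw [hb_def]; nlinarith
  have hcε : c ≤ ε := by rw [hc_def]; nlinarith
  have hsa : 0 < Real.sin a := Real.sin_pos_of_pos_of_lt_pi ha0 (by linarith)
  have hsb : 0 < Real.sin b := Real.sin_pos_of_pos_of_lt_pi hb0 (by linarith)
  have hsc : 0 < Real.sin c := Real.sin_pos_of_pos_of_lt_pi hc0 (by linarith)
  have hd0 : (0:ℝ) < 1 / t^2 - 1 := by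
    rw [sub_pos, lt_div_iff₀ (by positivity)]
    nlinarith
  have hdeq : 1 / t^2 - 1 = a * b / c^2 := by
    rw [ha_def, hb_def, hc_def]
    field_simp
    ring
  have key : Real.sin a * Real.sin b / Real.sin c ^ 2 =
      (Real.sin a / a) * (Real.sin b / b) / (Real.sin c / c)^2 * (1 / t^2 - 1) := by
    rw [hdeq]
    field_simp
  have hP0 : (0:ℝ) < (Real.sin a / a) * (Real.sin b / b) := by positivity
  have hQ0 : (0:ℝ) < (Real.sin c / c)^2 := by positivity
  have hlog : Ihat x t = Real.log (Real.sin a / a) + Real.log (Real.sin b / b)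
      - 2 * Real.log (Real.sin c / c) + Real.log (1 / t^2 - 1) := by
    rw [Ihat, ← ha_def, ← hb_def, ← hc_def, key, Real.log_mul (by positivity) hd0.ne',
      Real.log_div hP0.ne' hQ0.ne', Real.log_mul (by positivity) (by positivity),
      Real.log_pow]
    push_cast
    ring
  have hA := hR₁' a ⟨ha0, haε⟩
  have hB := hR₁' b ⟨hb0, hbε⟩
  have hC := hR₁' c ⟨hc0, hcε⟩
  have habc : a^2 + b^2 + 2 * c^2 ≤ 3/2 * x^2 := by
    have he : a^2 + b^2 + 2 * c^2 = x^2 * (2 + 4 * t^2) / 4 := by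
      rw [ha_def, hb_def, hc_def]; ring
    rw [he]
    nlinarith [mul_nonneg (sq_nonneg x) (by nlinarith : (0:ℝ) ≤ 1 - t^2)]
  have htri : |Ihat x t| ≤ |Real.log (Real.sin a / a)| + |Real.log (Real.sin b / b)|
      + 2 * |Real.log (Real.sin c / c)| + |Real.log (1 / t^2 - 1)| := by
    rw [hlog]
    calc |Real.log (Real.sin a / a) + Real.log (Real.sin b / b)
          - 2 * Real.log (Real.sin c / c) + Real.log (1 / t^2 - 1)|
        ≤ |Real.log (Real.sin a / a) + Real.log (Real.sin b / b)
          - 2 * Real.log (Real.sin c / c)| + |Real.log (1 / t^2 - 1)| := abs_add_le _ _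
      _ ≤ |Real.log (Real.sin a / a) + Real.log (Real.sin b / b)|
          + |2 * Real.log (Real.sin c / c)| + |Real.log (1 / t^2 - 1)| := by
            have := abs_sub (Real.log (Real.sin a / a) + Real.log (Real.sin b / b))
              (2 * Real.log (Real.sin c / c))
            linarith
      _ ≤ _ := by
            have h1 := abs_add_le (Real.log (Real.sin a / a)) (Real.log (Real.sin b / b))
            have h2 : |2 * Real.log (Real.sin c / c)| = 2 * |Real.log (Real.sin c / c)| := by
              rw [abs_mul, abs_two]
            linarith
  have hmul : R₁ * a^2 + R₁ * b^2 + 2 * (R₁ * c^2) ≤ 3/2 * R₁ * x^2 := by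
    nlinarith
  linarith

lemma aux_sqrt_bound {x t : ℝ} (hx : 0 < x) (hx1 : x < 1) (ht : 0 < t) (ht1 : t ≤ 1) :
    Real.sqrt (Real.log (1 + 1 / (x * t))) ≤
      Real.sqrt (Real.log (1 / x)) + Real.sqrt (Real.log (1 / t))
        + Real.sqrt (Real.log (1 + x)) := by
  have hxt : 0 < x * t := by positivity
  have hlogx : 0 ≤ Real.log (1 / x) := Real.log_nonneg (by rw [le_div_iff₀ hx]; linarith)
  have hlogt : 0 ≤ Real.log (1 / t) := Real.log_nonneg (by rw [le_div_iff₀ ht]; linarith)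
  have hlogx1 : 0 ≤ Real.log (1 + x) := Real.log_nonneg (by linarith)
  have hbound : Real.log (1 + 1 / (x * t)) ≤
      Real.log (1 / x) + Real.log (1 / t) + Real.log (1 + x) := by
    have e1 : 1 + 1 / (x * t) = (x * t + 1) / (x * t) := by field_simp
    have e2 : (x * t + 1) / (x * t) ≤ (1 + x) / (x * t) := by
      refine (div_le_div_iff_of_pos_right hxt).mpr ?_
      nlinarith
    have e3 : Real.log ((1 + x) / (x * t)) =
        Real.log (1 / x) + Real.log (1 / t) + Real.log (1 + x) := by
      rw [Real.log_div (by positivity) hxt.ne', Real.log_mul hx.ne' ht.ne',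
        one_div, one_div, Real.log_inv, Real.log_inv]
      ring
    calc Real.log (1 + 1 / (x * t)) ≤ Real.log ((1 + x) / (x * t)) := by
          rw [e1]; exact Real.log_le_log (by positivity) e2
      _ = _ := e3
  calc Real.sqrt (Real.log (1 + 1 / (x * t)))
      ≤ Real.sqrt (Real.log (1 / x) + Real.log (1 / t) + Real.log (1 + x)) :=
        Real.sqrt_le_sqrt hbound
    _ ≤ _ := aux_sqrt_add3 hlogx hlogt hlogx1



set_option maxHeartbeats 1000000 in
/-- Asymptotic bound for `U₁(x)/(−x²·log x·√(log(1 + 1/x)))` on `(0, ε]`. -/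
theorem stmt_7 (ε : ℝ) (hε : 0 < ε) (hε1 : ε < 1) (R₁ : ℝ) (hR₁ : 0 ≤ R₁)
    (hR₁' : ∀ y ∈ Ioc (0:ℝ) ε, |Real.log (Real.sin y / y)| ≤ R₁ * y ^ 2) :
    ∀ x ∈ Ioc (0:ℝ) ε,
      U₁ x / (-(x ^ 2 * Real.log x * Real.sqrt (Real.log (1 + 1 / x)))) ≤
        (1 / Real.sqrt (Real.log (1 + 1 / x))) *
          (Real.log 2 / Real.sqrt (Real.log (1 / x))
            + (c₁ + Real.log 2 * Real.sqrt (Real.log (1 + x))) / Real.log (1 / x)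
            + (3 * R₁ / 8) * x ^ 2 *
              (2 / Real.sqrt (Real.log (1 / x))
                + (Real.sqrt (Real.pi / 2) + 2 * Real.sqrt (Real.log (1 + x)))
                    / Real.log (1 / x))) := by
  rintro x ⟨hx0, hxε⟩
  have hx1 : x < 1 := lt_of_le_of_lt hxε hε1
  obtain ⟨L, hL_def⟩ : ∃ L : ℝ, L = Real.log (1 / x) := ⟨_, rfl⟩
  obtain ⟨P, hP_def⟩ : ∃ P : ℝ, P = Real.log (1 + x) := ⟨_, rfl⟩
  obtain ⟨M, hM_def⟩ : ∃ M : ℝ, M = Real.log (1 + 1 / x) := ⟨_, rfl⟩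
  have hL : 0 < L := hL_def ▸ Real.log_pos (by rw [lt_div_iff₀ hx0]; linarith)
  have hM : 0 < M := hM_def ▸ Real.log_pos (by linarith [one_div_pos.mpr hx0])
  have hsL : 0 < Real.sqrt L := Real.sqrt_pos.mpr hL
  have hsM : 0 < Real.sqrt M := Real.sqrt_pos.mpr hM
  have hlogx : Real.log x = -L := by rw [hL_def, one_div, Real.log_inv, neg_neg]
  have hD : 0 < -(x ^ 2 * Real.log x * Real.sqrt M) := by
    rw [hlogx]
    have h : -(x ^ 2 * -L * Real.sqrt M) = x^2 * L * Real.sqrt M := by ring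
    rw [h]; positivity
  obtain ⟨K, hK_def⟩ : ∃ K : ℝ, K = 3/2 * R₁ * x^2 := ⟨_, rfl⟩
  have hK : 0 ≤ K := by rw [hK_def]; positivity
  obtain ⟨T, hT_def⟩ : ∃ T : ℝ, T = Real.log 2 * Real.sqrt L + c₁ + Real.log 2 * Real.sqrt P
      + 3 * R₁ / 8 * x^2 * (2 * Real.sqrt L + Real.sqrt (Real.pi/2) + 2 * Real.sqrt P) :=
    ⟨_, rfl⟩
  rw [← hL_def, ← hP_def, ← hM_def, div_le_iff₀ hD]
  -- key integral inequality
  have hI : (∫ t in (0:ℝ)..1, |Ihat x t| * t * Real.sqrt (Real.log (1 + 1 / (x * t)))) ≤ T := by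
    rw [intervalIntegral.integral_of_le zero_le_one]
    have hintT : IntegrableOn (fun t : ℝ => t) (Ioc 0 1) :=
      (intervalIntegrable_iff_integrableOn_Ioc_of_le zero_le_one).mp
        (continuous_id.intervalIntegrable 0 1)
    obtain ⟨g, hg_def⟩ : ∃ g : ℝ → ℝ, g = fun t =>
        ((Real.sqrt L + Real.sqrt P) * (|Real.log (1 / t^2 - 1)| * t)
        + |Real.log (1 / t^2 - 1)| * t * Real.sqrt (Real.log (1 / t)))
        + ((K * (Real.sqrt L + Real.sqrt P)) * t
        + K * (t * Real.sqrt (Real.log (1 / t)))) := ⟨_, rfl⟩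
    have hA : IntegrableOn
        (fun t : ℝ => (Real.sqrt L + Real.sqrt P) * (|Real.log (1 / t^2 - 1)| * t))
        (Ioc 0 1) := aux_intJ1.const_mul _
    have hB := aux_intJ2
    have hC : IntegrableOn (fun t : ℝ => (K * (Real.sqrt L + Real.sqrt P)) * t) (Ioc 0 1) :=
      hintT.const_mul _
    have hD' : IntegrableOn (fun t : ℝ => K * (t * Real.sqrt (Real.log (1 / t)))) (Ioc 0 1) :=
      aux_intJ4.const_mul _
    have hgi : IntegrableOn g (Ioc 0 1) := by
      rw [hg_def]
      exact (hA.add hB).add (hC.add hD')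
    have hmono : (∫ t in Ioc (0:ℝ) 1, |Ihat x t| * t * Real.sqrt (Real.log (1 + 1 / (x * t))))
        ≤ ∫ t in Ioc (0:ℝ) 1, g t := by
      apply integral_mono_of_nonneg
      · refine (ae_restrict_iff' measurableSet_Ioc).mpr ?_
        filter_upwards with t ht
        obtain ⟨ht0, ht1⟩ := ht
        have : (0:ℝ) ≤ |Ihat x t| * t * Real.sqrt (Real.log (1 + 1 / (x * t))) := by positivity
        exact this
      · exact hgi
      · refine (ae_restrict_iff' measurableSet_Ioc).mpr ?_
        filter_upwards with t ht
        obtain ⟨ht0, ht1⟩ := ht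
        show |Ihat x t| * t * Real.sqrt (Real.log (1 + 1 / (x * t))) ≤ g t
        have hsqb := aux_sqrt_bound hx0 hx1 ht0 ht1
        rcases eq_or_lt_of_le ht1 with h1 | h1
        · have hIh : Ihat x 1 = 0 := by simp [Ihat]
          rw [← h1] at hIh
          rw [hIh]
          simp only [abs_zero, zero_mul]
          rw [hg_def]
          have h2 : (0:ℝ) ≤ |Real.log (1 / t^2 - 1)| := abs_nonneg _
          have h3 : (0:ℝ) ≤ Real.sqrt (Real.log (1/t)) := Real.sqrt_nonneg _
          have h4 : (0:ℝ) ≤ Real.sqrt L + Real.sqrt P := by positivity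
          dsimp only
          nlinarith [mul_nonneg h2 ht0.le, mul_nonneg (mul_nonneg h2 ht0.le) h3,
            mul_nonneg (mul_nonneg hK h4) ht0.le,
            mul_nonneg hK (mul_nonneg ht0.le h3),
            mul_nonneg h4 (mul_nonneg h2 ht0.le)]
        · have hIb := aux_Ihat_bound hε1 hR₁ hR₁' hx0 hxε ht0 h1
          have step : |Ihat x t| * t * Real.sqrt (Real.log (1 + 1 / (x * t)))
              ≤ (|Real.log (1 / t^2 - 1)| + K) *
                (t * (Real.sqrt L + Real.sqrt (Real.log (1/t)) + Real.sqrt P)) := by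
            have e1 : |Ihat x t| * t * Real.sqrt (Real.log (1 + 1 / (x * t)))
                = |Ihat x t| * (t * Real.sqrt (Real.log (1 + 1 / (x * t)))) := by ring
            rw [e1]
            apply mul_le_mul (by rw [hK_def]; exact hIb)
            · have : Real.sqrt (Real.log (1 + 1 / (x * t))) ≤
                  Real.sqrt L + Real.sqrt (Real.log (1/t)) + Real.sqrt P := by
                rw [hL_def, hP_def]; exact hsqb
              exact mul_le_mul le_rfl this (Real.sqrt_nonneg _) ht0.le
            · positivity
            · positivity
          calc |Ihat x t| * t * Real.sqrt (Real.log (1 + 1 / (x * t)))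
              ≤ (|Real.log (1 / t^2 - 1)| + K) *
                (t * (Real.sqrt L + Real.sqrt (Real.log (1/t)) + Real.sqrt P)) := step
            _ = g t := by rw [hg_def]; ring
    have hI1 : (∫ t in Ioc (0:ℝ) 1, |Real.log (1 / t^2 - 1)| * t) = Real.log 2 := by
      rw [← intervalIntegral.integral_of_le zero_le_one]; exact aux_V1
    have hI2 : (∫ t in Ioc (0:ℝ) 1,
        |Real.log (1 / t^2 - 1)| * t * Real.sqrt (Real.log (1 / t))) = c₁ := by
      rw [← intervalIntegral.integral_of_le zero_le_one, c₁]
    have hI3 : (∫ t in Ioc (0:ℝ) 1, t) = 1/2 := by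
      rw [← intervalIntegral.integral_of_le zero_le_one, integral_id]
      norm_num
    have e1 : (∫ t in Ioc (0:ℝ) 1, g t)
        = (∫ t in Ioc (0:ℝ) 1, ((Real.sqrt L + Real.sqrt P) * (|Real.log (1 / t^2 - 1)| * t)
            + |Real.log (1 / t^2 - 1)| * t * Real.sqrt (Real.log (1 / t))))
          + ∫ t in Ioc (0:ℝ) 1, ((K * (Real.sqrt L + Real.sqrt P)) * t
            + K * (t * Real.sqrt (Real.log (1 / t)))) := by
      rw [hg_def]; exact integral_add (hA.add hB) (hC.add hD')
    have e2 : (∫ t in Ioc (0:ℝ) 1, ((Real.sqrt L + Real.sqrt P) * (|Real.log (1 / t^2 - 1)| * t)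
            + |Real.log (1 / t^2 - 1)| * t * Real.sqrt (Real.log (1 / t))))
        = (∫ t in Ioc (0:ℝ) 1, (Real.sqrt L + Real.sqrt P) * (|Real.log (1 / t^2 - 1)| * t))
          + ∫ t in Ioc (0:ℝ) 1, |Real.log (1 / t^2 - 1)| * t * Real.sqrt (Real.log (1 / t)) :=
      integral_add hA hB
    have e2b : (∫ t in Ioc (0:ℝ) 1, (Real.sqrt L + Real.sqrt P) * (|Real.log (1 / t^2 - 1)| * t))
        = (Real.sqrt L + Real.sqrt P) * ∫ t in Ioc (0:ℝ) 1, |Real.log (1 / t^2 - 1)| * t :=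
      integral_const_mul _ _
    have e3 : (∫ t in Ioc (0:ℝ) 1, ((K * (Real.sqrt L + Real.sqrt P)) * t
            + K * (t * Real.sqrt (Real.log (1 / t)))))
        = (∫ t in Ioc (0:ℝ) 1, (K * (Real.sqrt L + Real.sqrt P)) * t)
          + ∫ t in Ioc (0:ℝ) 1, K * (t * Real.sqrt (Real.log (1 / t))) :=
      integral_add hC hD'
    have e3b : (∫ t in Ioc (0:ℝ) 1, (K * (Real.sqrt L + Real.sqrt P)) * t)
        = (K * (Real.sqrt L + Real.sqrt P)) * ∫ t in Ioc (0:ℝ) 1, t :=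
      integral_const_mul _ _
    have e3c : (∫ t in Ioc (0:ℝ) 1, K * (t * Real.sqrt (Real.log (1 / t))))
        = K * ∫ t in Ioc (0:ℝ) 1, t * Real.sqrt (Real.log (1 / t)) :=
      integral_const_mul _ _
    have hval : (∫ t in Ioc (0:ℝ) 1, g t) = T := by
      rw [e1, e2, e2b, e3, e3b, e3c, hI1, hI2, hI3, aux_V4, hT_def, hK_def]
      ring
    calc (∫ t in Ioc (0:ℝ) 1, |Ihat x t| * t * Real.sqrt (Real.log (1 + 1 / (x * t))))
        ≤ ∫ t in Ioc (0:ℝ) 1, g t := hmono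
      _ = T := hval
  -- final algebra
  obtain ⟨s, hs_def⟩ : ∃ s : ℝ, s = Real.sqrt L := ⟨_, rfl⟩
  have hs0 : 0 < s := hs_def ▸ hsL
  have hLs : L = s * s := by rw [hs_def]; exact (Real.mul_self_sqrt hL.le).symm
  have hRHSD : (1 / Real.sqrt M) *
      (Real.log 2 / Real.sqrt L + (c₁ + Real.log 2 * Real.sqrt P) / L
        + 3 * R₁ / 8 * x ^ 2 *
          (2 / Real.sqrt L + (Real.sqrt (Real.pi / 2) + 2 * Real.sqrt P) / L))
      * -(x ^ 2 * Real.log x * Real.sqrt M) = x^2 * T := by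
    rw [hlogx, hT_def, ← hs_def, hLs]
    field_simp
    ring
  rw [hRHSD]
  rw [U₁]
  exact mul_le_mul_of_nonneg_left hI (sq_nonneg x)
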